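/- Let K be a field and let I, J ⊂ K[x_1,…,x_n] be equigenerated graded ideals. Then μ(IJ) ≥ μ(I) + μ(J) − 1. In particular, if neither I nor J is a principal ideal, then μ(IJ) > max{μ(I), μ(J)}. -/

import Mathlib

open MvPolynomial
open scoped Pointwise

/-- The minimal number of generators of an ideal. -/
noncomputable def mu {R : Type*} [CommRing R] (I : Ideal R) : ℕ :=
  sInf {m : ℕ | ∃ s : Finset R, s.card = m ∧ Ideal.span (s : Set R) = I}

/-- An equigenerated graded ideal: generated by nonzero homogeneous polynomials,
all of the same degree. -/
def IsEquigenerated {K : Type*} [Field K] {n : ℕ} (I : Ideal (MvPolynomial (Fin n) K)) : Prop :=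
  ∃ (d : ℕ) (S : Set (MvPolynomial (Fin n) K)), S.Nonempty ∧
    (∀ f ∈ S, f ≠ 0 ∧ f.IsHomogeneous d) ∧ I = Ideal.span S

namespace NumGenAux

variable {K : Type*} [Field K] {n : ℕ}

/-- The synonym type used for the lexicographic monomial order. -/
abbrev L (n : ℕ) := Lex (Fin n →₀ ℕ)

/-- Leading monomial w.r.t. lex. -/
noncomputable def lm (p : MvPolynomial (Fin n) K) : L n :=
  AddMonoidAlgebra.supDegree (toLex : (Fin n →₀ ℕ) → L n) p

theorem toLex_inj : Function.Injective (toLex : (Fin n →₀ ℕ) → L n) := toLex.injective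

theorem lm_mul {p q : MvPolynomial (Fin n) K} (hp : p ≠ 0) (hq : q ≠ 0) :
    lm (p * q) = lm p + lm q := by
  apply AddMonoidAlgebra.supDegree_mul toLex_inj (fun _ _ => rfl) _ hp hq
  rw [Ne, mul_eq_zero]
  push_neg
  constructor <;> rw [AddMonoidAlgebra.leadingCoeff_ne_zero toLex_inj] <;> assumption

theorem lm_smul (p : MvPolynomial (Fin n) K) {c : K} (hc : c ≠ 0) : lm (c • p) = lm p := by
  unfold lm AddMonoidAlgebra.supDegree
  rw [show AddMonoidAlgebra.coeff (c • p) = c • AddMonoidAlgebra.coeff p from rfl, Finsupp.support_smul_eq hc]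

theorem exists_lm_mem (p : MvPolynomial (Fin n) K) (hp : p ≠ 0) :
    ∃ a ∈ p.support, lm p = toLex a :=
  AddMonoidAlgebra.exists_supDegree_mem_support toLex hp

theorem coeff_lm_ne_zero {p : MvPolynomial (Fin n) K} (hp : p ≠ 0) :
    coeff (ofLex (lm p)) p ≠ 0 := by
  obtain ⟨a, ha, he⟩ := exists_lm_mem p hp
  rw [he]
  exact MvPolynomial.mem_support_iff.1 ha

/-- Homogeneous component of a product with something whose low components vanish. -/
theorem hc_mul_homog (r g : MvPolynomial (Fin n) K) {dg : ℕ} (j : ℕ) (hg : g.IsHomogeneous dg) :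
    homogeneousComponent j (r * g) =
      if dg ≤ j then homogeneousComponent (j - dg) r * g else 0 := by
  conv_lhs => rw [← sum_homogeneousComponent r, Finset.sum_mul, map_sum]
  have key : ∀ i, homogeneousComponent j (homogeneousComponent i r * g)
      = if j = i + dg then homogeneousComponent i r * g else 0 := fun i =>
    homogeneousComponent_of_mem (((homogeneousComponent_isHomogeneous i r).mul hg))
  simp_rw [key]
  by_cases h : dg ≤ j
  · have : ∀ i, (j = i + dg) = (i = j - dg) := by
      intro i; apply propext; omega
    simp_rw [this, Finset.sum_ite_eq' (Finset.range (r.totalDegree + 1))]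
    rw [if_pos h]
    by_cases h2 : j - dg ∈ Finset.range (r.totalDegree + 1)
    · rw [if_pos h2]
    · rw [if_neg h2, homogeneousComponent_eq_zero, zero_mul]
      simp only [Finset.mem_range] at h2; omega
  · have : ∀ i, (j = i + dg) = False := by intro i; apply propext; simp; omega
    simp_rw [this, if_false, Finset.sum_const_zero, if_neg h]

theorem comp_mul_low (r t : MvPolynomial (Fin n) K) (D : ℕ)
    (hlow : ∀ j < D, homogeneousComponent j t = 0) :
    (∀ j < D, homogeneousComponent j (r * t) = 0) ∧
      homogeneousComponent D (r * t) = coeff 0 r • homogeneousComponent D t := by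
  have hdec : r * t = ∑ k ∈ Finset.range (t.totalDegree + 1), r * homogeneousComponent k t := by
    rw [← Finset.mul_sum, sum_homogeneousComponent]
  have hterm : ∀ j, homogeneousComponent j (r * t)
      = ∑ k ∈ Finset.range (t.totalDegree + 1),
          if k ≤ j then homogeneousComponent (j - k) r * homogeneousComponent k t else 0 := by
    intro j
    rw [hdec, map_sum]
    exact Finset.sum_congr rfl fun k _ =>
      hc_mul_homog r _ j (homogeneousComponent_isHomogeneous k t)
  constructor
  · intro j hj
    rw [hterm j, Finset.sum_eq_zero]
    intro k hk
    by_cases h : k ≤ j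
    · rw [if_pos h, hlow k (lt_of_le_of_lt h hj), mul_zero]
    · rw [if_neg h]
  · rw [hterm D]
    have : ∀ k ∈ Finset.range (t.totalDegree + 1),
        (if k ≤ D then homogeneousComponent (D - k) r * homogeneousComponent k t else 0)
        = if k = D then coeff 0 r • homogeneousComponent D t else 0 := by
      intro k _
      by_cases hk : k = D
      · subst hk
        rw [if_pos le_rfl, if_pos rfl, Nat.sub_self, homogeneousComponent_zero,
          ← smul_eq_C_mul]
      · rw [if_neg hk]
        by_cases h : k ≤ D
        · rw [if_pos h, hlow k (lt_of_le_of_ne h hk), mul_zero]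
        · rw [if_neg h]
    rw [Finset.sum_congr rfl this, Finset.sum_ite_eq' (Finset.range (t.totalDegree + 1))]
    by_cases h2 : D ∈ Finset.range (t.totalDegree + 1)
    · rw [if_pos h2]
    · rw [if_neg h2, homogeneousComponent_eq_zero, smul_zero]
      simp only [Finset.mem_range] at h2; omega

theorem comp_span (G : Set (MvPolynomial (Fin n) K)) (D : ℕ)
    (hG : ∀ g ∈ G, g.IsHomogeneous D) {t : MvPolynomial (Fin n) K} (ht : t ∈ Ideal.span G) :
    (∀ j < D, homogeneousComponent j t = 0) ∧
      homogeneousComponent D t ∈ Submodule.span K G := by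
  induction ht using Submodule.span_induction with
  | mem g hg =>
    have hmem := (mem_homogeneousSubmodule D g).2 (hG g hg)
    constructor
    · intro j hj
      rw [homogeneousComponent_of_mem hmem, if_neg hj.ne]
    · rw [homogeneousComponent_of_mem hmem, if_pos rfl]
      exact Submodule.subset_span hg
  | zero => simp
  | add x y hx hy ihx ihy =>
    refine ⟨fun j hj => ?_, ?_⟩
    · rw [map_add, ihx.1 j hj, ihy.1 j hj, add_zero]
    · rw [map_add]; exact Submodule.add_mem _ ihx.2 ihy.2
  | smul r t ht iht =>
    rw [smul_eq_mul]
    refine ⟨(comp_mul_low r t D iht.1).1, ?_⟩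
    rw [(comp_mul_low r t D iht.1).2]
    exact Submodule.smul_mem _ _ iht.2

theorem fd_of_le_homog {d : ℕ} {V : Submodule K (MvPolynomial (Fin n) K)}
    (hV : V ≤ homogeneousSubmodule (Fin n) K d) : FiniteDimensional K V := by
  have h2 : V ≤ restrictTotalDegree (Fin n) K d := by
    intro p hp
    rw [mem_restrictTotalDegree]
    exact ((mem_homogeneousSubmodule d p).1 (hV hp)).totalDegree_le
  exact Submodule.finiteDimensional_of_le h2

/-- Upper bound : `mu I ≤ finrank (span_K S)` for `S` homogeneous generating `I`. -/
theorem mu_le_finrank {d : ℕ} (S : Set (MvPolynomial (Fin n) K))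
    (hS : ∀ f ∈ S, f.IsHomogeneous d) :
    mu (Ideal.span S) ≤ Module.finrank K (Submodule.span K S) := by
  classical
  set V := Submodule.span K S with hVdef
  have hVle : V ≤ homogeneousSubmodule (Fin n) K d :=
    Submodule.span_le.2 fun f hf => (mem_homogeneousSubmodule d f).2 (hS f hf)
  haveI : FiniteDimensional K V := fd_of_le_homog hVle
  set b := Module.finBasis K V with hb
  set s : Finset (MvPolynomial (Fin n) K) :=
    Finset.image (fun i => ((b i : V) : MvPolynomial (Fin n) K)) Finset.univ with hs
  have hinj : Function.Injective (fun i => ((b i : V) : MvPolynomial (Fin n) K)) :=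
    Subtype.coe_injective.comp b.injective
  have hcard : s.card = Module.finrank K V := by
    rw [hs, Finset.card_image_of_injective _ hinj, Finset.card_univ, Fintype.card_fin]
  have hsset : (s : Set (MvPolynomial (Fin n) K)) =
      Set.range (fun i => ((b i : V) : MvPolynomial (Fin n) K)) := by
    rw [hs, Finset.coe_image, Finset.coe_univ, Set.image_univ]
  have hspanK : Submodule.span K (s : Set (MvPolynomial (Fin n) K)) = V := by
    rw [hsset]
    have : Set.range (fun i => ((b i : V) : MvPolynomial (Fin n) K)) =
        V.subtype '' (Set.range b) := by
      rw [← Set.range_comp]; rfl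
    rw [this, Submodule.span_image, b.span_eq, Submodule.map_top, Submodule.range_subtype]
  have hspan : Ideal.span (s : Set (MvPolynomial (Fin n) K)) = Ideal.span S := by
    apply le_antisymm
    · rw [Ideal.span_le]
      intro x hx
      have hxV : x ∈ V := hspanK ▸ Submodule.subset_span hx
      have hVI : V ≤ (Ideal.span S).restrictScalars K :=
        Submodule.span_le.2 fun f hf => Ideal.subset_span hf
      exact hVI hxV
    · rw [Ideal.span_le]
      intro f hf
      have h1 : f ∈ V := Submodule.subset_span hf
      rw [← hspanK] at h1
      exact Submodule.span_subset_span K (MvPolynomial (Fin n) K) _ h1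
  rw [← hcard]
  exact Nat.sInf_le ⟨s, rfl, hspan⟩

/-- Lower bound core: any finite generating set of an ideal generated in a single degree `D`
has at least `finrank (span_K G)` elements. -/
theorem finrank_le_card_of_span {D : ℕ} (G : Set (MvPolynomial (Fin n) K))
    (hG : ∀ g ∈ G, g.IsHomogeneous D) (T : Finset (MvPolynomial (Fin n) K))
    (hT : Ideal.span (T : Set (MvPolynomial (Fin n) K)) = Ideal.span G) :
    Module.finrank K (Submodule.span K G) ≤ T.card := by
  classical
  set φ : MvPolynomial (Fin n) K → MvPolynomial (Fin n) K :=
    fun p => homogeneousComponent D p with hφ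
  set s2 : Finset (MvPolynomial (Fin n) K) := T.image φ with hs2
  have hle : Submodule.span K G ≤ Submodule.span K (s2 : Set (MvPolynomial (Fin n) K)) := by
    rw [Submodule.span_le]
    intro g hg
    have hgI : g ∈ Ideal.span (T : Set (MvPolynomial (Fin n) K)) :=
      hT ▸ Ideal.subset_span hg
    obtain ⟨f, -, hf⟩ := Submodule.mem_span_finset.1 hgI
    have hgφ : φ g = g := by
      rw [hφ]
      simp only
      rw [homogeneousComponent_of_mem ((mem_homogeneousSubmodule D g).2 (hG g hg)), if_pos rfl]
    have hsum : φ g = ∑ t ∈ T, coeff 0 (f t) • φ t := by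
      rw [hφ]
      simp only
      rw [← hf, map_sum]
      apply Finset.sum_congr rfl
      intro t htT
      have htI : t ∈ Ideal.span G := by
        rw [← hT]; exact Ideal.subset_span htT
      have hlow := (comp_span G D hG htI).1
      rw [smul_eq_mul]
      exact (comp_mul_low (f t) t D hlow).2
    rw [← hgφ, hsum]
    apply Submodule.sum_mem
    intro t htT
    apply Submodule.smul_mem
    apply Submodule.subset_span
    exact Finset.mem_coe.2 (Finset.mem_image_of_mem φ htT)
  haveI : FiniteDimensional K
      (Submodule.span K (s2 : Set (MvPolynomial (Fin n) K))) :=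
    FiniteDimensional.span_of_finite K (Finset.finite_toSet _)
  calc Module.finrank K (Submodule.span K G)
      ≤ Module.finrank K (Submodule.span K (s2 : Set (MvPolynomial (Fin n) K))) :=
        Submodule.finrank_mono hle
    _ ≤ s2.card := finrank_span_finset_le_card _
    _ ≤ T.card := by rw [hs2]; exact Finset.card_image_le

/-- The set of leading monomials of a homogeneous subspace is finite. -/
theorem lm_set_finite {d : ℕ} {V : Submodule K (MvPolynomial (Fin n) K)}
    (hV : V ≤ homogeneousSubmodule (Fin n) K d) :
    (lm '' ((V : Set (MvPolynomial (Fin n) K)) \ {0})).Finite := by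
  apply Set.Finite.subset
    ((Finset.finsuppAntidiag (Finset.univ : Finset (Fin n)) d).finite_toSet.image toLex)
  rintro m ⟨v, ⟨hvV, hv0⟩, rfl⟩
  simp only [Set.mem_singleton_iff] at hv0
  obtain ⟨a, ha, he⟩ := exists_lm_mem v hv0
  refine ⟨a, ?_, he.symm⟩
  simp only [Finset.coe_image, Set.mem_image, Finset.mem_coe, Finset.mem_finsuppAntidiag]
  have hcoeff : coeff a v ≠ 0 := MvPolynomial.mem_support_iff.1 ha
  have hhom : v.IsHomogeneous d := (mem_homogeneousSubmodule d v).1 (hV hvV)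
  have hdeg : a.degree = d := by
    by_contra hne
    exact hcoeff (hhom.coeff_eq_zero hne)
  refine ⟨?_, Finset.subset_univ _⟩
  rw [← hdeg, Finsupp.degree]
  exact (Finset.sum_subset (Finset.subset_univ _) fun i _ hi =>
    Finsupp.notMem_support_iff.1 hi).symm

/-- A coefficient functional as a linear map. -/
noncomputable def coeffLM (μ : Fin n →₀ ℕ) : MvPolynomial (Fin n) K →ₗ[K] K where
  toFun p := coeff μ p
  map_add' p q := coeff_add μ p q
  map_smul' c p := coeff_smul μ c p

theorem finrank_le_card_lm {d : ℕ} {V : Submodule K (MvPolynomial (Fin n) K)}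
    (hV : V ≤ homogeneousSubmodule (Fin n) K d) :
    Module.finrank K V ≤ (lm_set_finite hV).toFinset.card := by
  classical
  set A := (lm_set_finite hV).toFinset with hA
  set F : V →ₗ[K] ({x // x ∈ A} → K) :=
    LinearMap.pi (fun m => (coeffLM (ofLex (m : L n))).comp V.subtype) with hF
  have hFinj : Function.Injective F := by
    rw [← LinearMap.ker_eq_bot, Submodule.eq_bot_iff]
    rintro ⟨v, hvV⟩ hker
    rw [LinearMap.mem_ker] at hker
    rw [Submodule.mk_eq_zero]
    by_contra hv0
    have hmem : lm v ∈ A := by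
      rw [hA, Set.Finite.mem_toFinset]
      exact ⟨v, ⟨hvV, fun h => hv0 h⟩, rfl⟩
    have hz := congrFun hker ⟨lm v, hmem⟩
    simp only [hF, LinearMap.pi_apply, LinearMap.comp_apply, Submodule.subtype_apply,
      Pi.zero_apply] at hz
    exact coeff_lm_ne_zero hv0 hz
  haveI : FiniteDimensional K V := fd_of_le_homog hV
  calc Module.finrank K V ≤ Module.finrank K ({x // x ∈ A} → K) :=
        LinearMap.finrank_le_finrank_of_injective hFinj
    _ = A.card := by rw [Module.finrank_fintype_fun_eq_card, Fintype.card_coe]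

theorem linearIndependent_of_lm {ι : Type*} (f : ι → MvPolynomial (Fin n) K)
    (h0 : ∀ i, f i ≠ 0) (hinj : Function.Injective (lm ∘ f)) :
    LinearIndependent K f := by
  rw [linearIndependent_iff']
  intro s g hsum i hi
  by_contra hgi
  classical
  have hsub : ∑ j ∈ s.filter (fun j => g j ≠ 0), g j • f j = 0 := by
    rw [Finset.sum_filter_of_ne]
    · exact hsum
    · intro x _ hx
      intro h
      exact hx (by rw [h, zero_smul])
  refine AddMonoidAlgebra.sum_ne_zero_of_injOn_supDegree (D := (toLex : (Fin n →₀ ℕ) → L n))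
    ?_ ?_ ?_ hsub
  · exact ⟨i, Finset.mem_filter.2 ⟨hi, hgi⟩⟩
  · intro j hj
    rw [Finset.mem_filter] at hj
    exact smul_ne_zero hj.2 (h0 j)
  · intro x hx y hy hxy
    rw [Finset.coe_filter, Set.mem_setOf_eq] at hx hy
    have hxl : AddMonoidAlgebra.supDegree (toLex : (Fin n →₀ ℕ) → L n) (g x • f x)
        = lm (f x) := lm_smul (f x) hx.2
    have hyl : AddMonoidAlgebra.supDegree (toLex : (Fin n →₀ ℕ) → L n) (g y • f y)
        = lm (f y) := lm_smul (f y) hy.2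
    apply hinj
    simp only [Function.comp_apply]
    rw [← hxl, ← hyl]
    exact hxy

/-- The key dimension inequality for products of homogeneous subspaces. -/
theorem finrank_mul_ge {d e : ℕ} (V W : Submodule K (MvPolynomial (Fin n) K))
    (hVh : V ≤ homogeneousSubmodule (Fin n) K d) (hWh : W ≤ homogeneousSubmodule (Fin n) K e)
    (hV0 : V ≠ ⊥) (hW0 : W ≠ ⊥) :
    Module.finrank K V + Module.finrank K W - 1 ≤ Module.finrank K ↥(V * W) := by
  classical
  set A := (lm_set_finite hVh).toFinset with hA
  set B := (lm_set_finite hWh).toFinset with hB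
  have hAmem : ∀ m ∈ A, ∃ v : MvPolynomial (Fin n) K, v ∈ V ∧ v ≠ 0 ∧ lm v = m := by
    intro m hm
    rw [hA, Set.Finite.mem_toFinset] at hm
    obtain ⟨v, ⟨hv1, hv2⟩, hv3⟩ := hm
    exact ⟨v, hv1, fun h => hv2 h, hv3⟩
  have hBmem : ∀ m ∈ B, ∃ w : MvPolynomial (Fin n) K, w ∈ W ∧ w ≠ 0 ∧ lm w = m := by
    intro m hm
    rw [hB, Set.Finite.mem_toFinset] at hm
    obtain ⟨w, ⟨hw1, hw2⟩, hw3⟩ := hm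
    exact ⟨w, hw1, fun h => hw2 h, hw3⟩
  have hAne : A.Nonempty := by
    obtain ⟨v, hvV, hv0⟩ := Submodule.exists_mem_ne_zero_of_ne_bot hV0
    exact ⟨lm v, by rw [hA, Set.Finite.mem_toFinset]; exact ⟨v, ⟨hvV, hv0⟩, rfl⟩⟩
  have hBne : B.Nonempty := by
    obtain ⟨w, hwW, hw0⟩ := Submodule.exists_mem_ne_zero_of_ne_bot hW0
    exact ⟨lm w, by rw [hB, Set.Finite.mem_toFinset]; exact ⟨w, ⟨hwW, hw0⟩, rfl⟩⟩
  set α := A.max' hAne with hα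
  set β := B.min' hBne with hβ
  set C : Finset (L n) := B.image (α + ·) ∪ A.image (· + β) with hC
  -- C has at least |A| + |B| - 1 elements
  have hCcard : A.card + B.card - 1 ≤ C.card := by
    have h1 : (B.image (α + ·)).card = B.card :=
      Finset.card_image_of_injective _ (add_right_injective α)
    have h2 : (A.image (· + β)).card = A.card :=
      Finset.card_image_of_injective _ (add_left_injective β)
    have hint : (B.image (α + ·)) ∩ (A.image (· + β)) ⊆ {α + β} := by
      intro t ht
      rw [Finset.mem_inter] at ht
      obtain ⟨ht1, ht2⟩ := ht
      obtain ⟨b, hb, rfl⟩ := Finset.mem_image.1 ht1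
      obtain ⟨a, ha, hab⟩ := Finset.mem_image.1 ht2
      have hbβ : β ≤ b := B.min'_le b hb
      have haα : a ≤ α := A.le_max' a ha
      have : α + b ≤ α + β := by
        calc α + b = a + β := hab.symm
          _ ≤ α + β := add_le_add_left haα β
      have hbeq : b = β := le_antisymm (le_of_add_le_add_left this) hbβ
      rw [Finset.mem_singleton, hbeq]
    have hintcard : ((B.image (α + ·)) ∩ (A.image (· + β))).card ≤ 1 := by
      calc _ ≤ ({α + β} : Finset (L n)).card := Finset.card_le_card hint
        _ = 1 := Finset.card_singleton _
    have := Finset.card_union_add_card_inter (B.image (α + ·)) (A.image (· + β))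
    rw [h1, h2] at this
    rw [hC]
    omega
  -- every element of C is the lm of a nonzero element of V * W
  have hCmem : ∀ c ∈ C, ∃ u : MvPolynomial (Fin n) K, u ∈ V * W ∧ u ≠ 0 ∧ lm u = c := by
    intro c hc
    rw [hC, Finset.mem_union] at hc
    rcases hc with hc | hc
    · obtain ⟨b, hb, rfl⟩ := Finset.mem_image.1 hc
      obtain ⟨v, hvV, hv0, hvlm⟩ := hAmem α (A.max'_mem hAne)
      obtain ⟨w, hwW, hw0, hwlm⟩ := hBmem b hb
      exact ⟨v * w, Submodule.mul_mem_mul hvV hwW, mul_ne_zero hv0 hw0,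
        by rw [lm_mul hv0 hw0, hvlm, hwlm]⟩
    · obtain ⟨a, ha, rfl⟩ := Finset.mem_image.1 hc
      obtain ⟨v, hvV, hv0, hvlm⟩ := hAmem a ha
      obtain ⟨w, hwW, hw0, hwlm⟩ := hBmem β (B.min'_mem hBne)
      exact ⟨v * w, Submodule.mul_mem_mul hvV hwW, mul_ne_zero hv0 hw0,
        by rw [lm_mul hv0 hw0, hvlm, hwlm]⟩
  choose u hu1 hu2 hu3 using hCmem
  -- V * W is homogeneous of degree d + e
  have hVW : V * W ≤ homogeneousSubmodule (Fin n) K (d + e) :=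
    le_trans (mul_le_mul' hVh hWh) (homogeneousSubmodule_mul d e)
  haveI : FiniteDimensional K ↥(V * W) := fd_of_le_homog hVW
  -- the family indexed by C
  set U : {c // c ∈ C} → ↥(V * W) := fun c => ⟨u c c.2, hu1 c c.2⟩ with hU
  have hUli : LinearIndependent K U := by
    apply LinearIndependent.of_comp (V * W).subtype
    have : ((V * W).subtype ∘ U) = fun c : {c // c ∈ C} => u c c.2 := rfl
    rw [this]
    apply linearIndependent_of_lm
    · exact fun c => hu2 c c.2
    · intro x y hxy
      simp only [Function.comp_apply] at hxy
      rw [hu3 x x.2, hu3 y y.2] at hxy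
      exact Subtype.ext hxy
  have hcard : C.card ≤ Module.finrank K ↥(V * W) := by
    have := hUli.fintype_card_le_finrank
    rwa [Fintype.card_coe] at this
  have hVA : Module.finrank K V ≤ A.card := finrank_le_card_lm hVh
  have hWB : Module.finrank K W ≤ B.card := finrank_le_card_lm hWh
  have hfin : A.card + B.card - 1 ≤ Module.finrank K ↥(V * W) := le_trans hCcard hcard
  omega

end NumGenAux

open NumGenAux in
/-- Theorem 1.7: if `I, J ⊂ K[x₁,…,xₙ]` are equigenerated graded ideals, then
`μ(IJ) ≥ μ(I) + μ(J) - 1`; in particular `μ(IJ) > max{μ(I), μ(J)}` if neither `I`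
nor `J` is principal. -/
theorem numGen_mul_ge {K : Type*} [Field K] {n : ℕ}
    (I J : Ideal (MvPolynomial (Fin n) K))
    (hI : IsEquigenerated I) (hJ : IsEquigenerated J) :
    mu I + mu J - 1 ≤ mu (I * J) ∧
    (¬ I.IsPrincipal → ¬ J.IsPrincipal → max (mu I) (mu J) < mu (I * J)) := by
  classical
  obtain ⟨d, S, hSne, hSel, rfl⟩ := hI
  obtain ⟨e, T, hTne, hTel, rfl⟩ := hJ
  set V : Submodule K (MvPolynomial (Fin n) K) := Submodule.span K S with hVdef
  set W : Submodule K (MvPolynomial (Fin n) K) := Submodule.span K T with hWdef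
  have hVh : V ≤ homogeneousSubmodule (Fin n) K d :=
    Submodule.span_le.2 fun f hf => (mem_homogeneousSubmodule d f).2 (hSel f hf).2
  have hWh : W ≤ homogeneousSubmodule (Fin n) K e :=
    Submodule.span_le.2 fun f hf => (mem_homogeneousSubmodule e f).2 (hTel f hf).2
  have hV0 : V ≠ ⊥ := by
    obtain ⟨f, hf⟩ := hSne
    intro hbot
    have : f ∈ V := Submodule.subset_span hf
    rw [hbot, Submodule.mem_bot] at this
    exact (hSel f hf).1 this
  have hW0 : W ≠ ⊥ := by
    obtain ⟨f, hf⟩ := hTne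
    intro hbot
    have : f ∈ W := Submodule.subset_span hf
    rw [hbot, Submodule.mem_bot] at this
    exact (hTel f hf).1 this
  -- the product ideal is generated by S * T in degree d + e
  have hST : ∀ g ∈ S * T, g.IsHomogeneous (d + e) := by
    rintro g ⟨f, hf, t, ht, rfl⟩
    exact (hSel f hf).2.mul (hTel t ht).2
  have hprod : Ideal.span S * Ideal.span T = Ideal.span (S * T) := Ideal.span_mul_span' S T
  have hspanKmul : Submodule.span K (S * T) = V * W := (Submodule.span_mul_span K S T).symm
  -- mu bounds
  have hmuI : mu (Ideal.span S) ≤ Module.finrank K V := mu_le_finrank S fun f hf => (hSel f hf).2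
  have hmuJ : mu (Ideal.span T) ≤ Module.finrank K W := mu_le_finrank T fun f hf => (hTel f hf).2
  -- lower bound for mu of the product
  have hmuIJ : Module.finrank K ↥(V * W) ≤ mu (Ideal.span S * Ideal.span T) := by
    rw [hprod]
    have hne : {m : ℕ | ∃ s : Finset (MvPolynomial (Fin n) K), s.card = m ∧
        Ideal.span (s : Set (MvPolynomial (Fin n) K)) = Ideal.span (S * T)}.Nonempty := by
      obtain ⟨s, hs⟩ := (IsNoetherian.noetherian (Ideal.span (S * T)))
      exact ⟨s.card, s, rfl, hs⟩
    obtain ⟨s, hscard, hsspan⟩ := Nat.sInf_mem hne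
    have hb : Module.finrank K ↥(V * W) ≤ s.card := by
      rw [← hspanKmul]
      exact finrank_le_card_of_span (S * T) hST s hsspan
    exact le_of_le_of_eq hb hscard
  have hkey : Module.finrank K V + Module.finrank K W - 1 ≤ Module.finrank K ↥(V * W) :=
    finrank_mul_ge V W hVh hWh hV0 hW0
  -- principality
  have hprin : ∀ (P : Ideal (MvPolynomial (Fin n) K)), mu P ≤ 1 →
      (∃ s : Finset (MvPolynomial (Fin n) K), s.card = mu P ∧
        Ideal.span (s : Set (MvPolynomial (Fin n) K)) = P) → P.IsPrincipal := by
    rintro P hP ⟨s, hscard, hsspan⟩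
    rcases Nat.le_one_iff_eq_zero_or_eq_one.1 hP with h | h
    · rw [h] at hscard
      rw [Finset.card_eq_zero] at hscard
      subst hscard
      simp only [Finset.coe_empty, Ideal.span_empty] at hsspan
      exact ⟨0, by rw [← hsspan]; exact (Ideal.span_singleton_eq_bot.mpr rfl).symm⟩
    · rw [h] at hscard
      rw [Finset.card_eq_one] at hscard
      obtain ⟨x, rfl⟩ := hscard
      exact ⟨x, by rw [← hsspan, Finset.coe_singleton]⟩
  have hIK : mu (Ideal.span S) + mu (Ideal.span T) - 1 ≤ mu (Ideal.span S * Ideal.span T) := by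
    omega
  refine ⟨hIK, fun hPI hPJ => ?_⟩
  have hmuI2 : 2 ≤ mu (Ideal.span S) := by
    by_contra h
    push_neg at h
    apply hPI
    apply hprin _ (by omega)
    have hne : {m : ℕ | ∃ s : Finset (MvPolynomial (Fin n) K), s.card = m ∧
        Ideal.span (s : Set (MvPolynomial (Fin n) K)) = Ideal.span S}.Nonempty := by
      obtain ⟨s, hs⟩ := (IsNoetherian.noetherian (Ideal.span S))
      exact ⟨s.card, s, rfl, hs⟩
    obtain ⟨s, hscard, hsspan⟩ := Nat.sInf_mem hne
    exact ⟨s, hscard, hsspan⟩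
  have hmuJ2 : 2 ≤ mu (Ideal.span T) := by
    by_contra h
    push_neg at h
    apply hPJ
    apply hprin _ (by omega)
    have hne : {m : ℕ | ∃ s : Finset (MvPolynomial (Fin n) K), s.card = m ∧
        Ideal.span (s : Set (MvPolynomial (Fin n) K)) = Ideal.span T}.Nonempty := by
      obtain ⟨s, hs⟩ := (IsNoetherian.noetherian (Ideal.span T))
      exact ⟨s.card, s, rfl, hs⟩
    obtain ⟨s, hscard, hsspan⟩ := Nat.sInf_mem hne
    exact ⟨s, hscard, hsspan⟩
  rw [max_lt_iff]
  omega
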